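/- Let f ∈ ℂ[x₁,…,x₆] be homogeneous of degree 3 such that the only common zero in ℂ⁶ of its partial derivatives is the origin, let f̂ be the unique symmetric trilinear form on ℂ⁶ with f̂(x,x,x) = f(x), and let W be the polynomial in the 16 variables (Φ₁ ∈ ℂ⁶, Φ₂ ∈ ℂ⁶, a₀,a₁,a₂,a₃ ∈ ℂ) given by W = Σ_{j=0}^{3} aⱼ · f̂(Φ₁,…,Φ₁,Φ₂,…,Φ₂) with 3−j arguments equal to Φ₁ and j arguments equal to Φ₂. If all 16 partial derivatives of W vanish at a point (Φ₁,Φ₂,a) and the vectors Φ₁, Φ₂ are linearly independent, then a₀ = a₁ = a₂ = a₃ = 0 and f(sΦ₁ + tΦ₂) = 0 for all s,t ∈ ℂ. (Hence on X₋ the critical locus of the superpotential W lies along the Fano variety of lines F_Y ⊂ Gr(2,6) ⊂ X₋.) -/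

import Mathlib

open MvPolynomial

lemma eval_line {σ : Type*} (p : MvPolynomial σ ℂ) (x d : σ → ℂ) (t : ℂ) :
    Polynomial.eval t (MvPolynomial.eval₂ Polynomial.C
        (fun v => Polynomial.C (x v) + Polynomial.C (d v) * Polynomial.X) p)
      = MvPolynomial.eval (fun v => x v + d v * t) p := by
  rw [MvPolynomial.polynomial_eval_eval₂]
  have h1 : (Polynomial.evalRingHom t).comp Polynomial.C = RingHom.id ℂ := by
    ext r; simp
  rw [h1]
  simp only [Polynomial.eval_add, Polynomial.eval_mul, Polynomial.eval_C, Polynomial.eval_X]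
  exact MvPolynomial.eval₂_id p

lemma coeff_one_line {σ : Type*} [Fintype σ] [DecidableEq σ] (x d : σ → ℂ) (p : MvPolynomial σ ℂ) :
    (MvPolynomial.eval₂ Polynomial.C
        (fun v => Polynomial.C (x v) + Polynomial.C (d v) * Polynomial.X) p).coeff 1
      = ∑ v, d v * MvPolynomial.eval x (MvPolynomial.pderiv v p) := by
  induction p using MvPolynomial.induction_on with
  | C a => simp
  | add p q hp hq =>
      simp [hp, hq, mul_add, Finset.sum_add_distrib]
  | mul_X p n hp =>
      have hQ0 : (MvPolynomial.eval₂ Polynomial.C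
          (fun v => Polynomial.C (x v) + Polynomial.C (d v) * Polynomial.X) p).coeff 0
          = MvPolynomial.eval x p := by
        rw [Polynomial.coeff_zero_eq_eval_zero, eval_line]
        simp
      rw [MvPolynomial.eval₂_mul, MvPolynomial.eval₂_X]
      rw [mul_add, Polynomial.coeff_add, ← mul_assoc, Polynomial.coeff_mul_X,
        Polynomial.coeff_mul_C, Polynomial.coeff_mul_C, hp, hQ0]
      have : ∀ v : σ, d v * MvPolynomial.eval x (MvPolynomial.pderiv v (p * X n))
          = x n * (d v * MvPolynomial.eval x (MvPolynomial.pderiv v p))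
            + (if v = n then d n * MvPolynomial.eval x p else 0) := by
        intro v
        rw [MvPolynomial.pderiv_mul]
        by_cases h : v = n
        · subst h
          simp [MvPolynomial.pderiv_X]
          ring
        · simp [MvPolynomial.pderiv_X_of_ne (Ne.symm h), h]
          ring
      rw [Finset.sum_congr rfl fun v _ => this v, Finset.sum_add_distrib]
      rw [Finset.sum_ite_eq' Finset.univ n (fun _ => d n * MvPolynomial.eval x p)]
      rw [← Finset.mul_sum]
      simp
      ring

lemma dirDeriv_eq_c1 {σ : Type*} [Fintype σ] [DecidableEq σ] (p : MvPolynomial σ ℂ)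
    (x d : σ → ℂ) (c₀ c₁ c₂ c₃ : ℂ)
    (h : ∀ t : ℂ, MvPolynomial.eval (fun v => x v + d v * t) p
        = c₀ + c₁ * t + c₂ * t ^ 2 + c₃ * t ^ 3) :
    ∑ v, d v * MvPolynomial.eval x (MvPolynomial.pderiv v p) = c₁ := by
  set Q := MvPolynomial.eval₂ Polynomial.C
      (fun v => Polynomial.C (x v) + Polynomial.C (d v) * Polynomial.X) p with hQdef
  have hQ : Q = Polynomial.C c₀ + Polynomial.C c₁ * Polynomial.X
      + Polynomial.C c₂ * Polynomial.X ^ 2 + Polynomial.C c₃ * Polynomial.X ^ 3 := by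
    apply Polynomial.funext
    intro t
    rw [hQdef, eval_line, h t]
    simp
  have := coeff_one_line x d p
  rw [← hQdef, hQ] at this
  rw [← this]
  simp [Polynomial.coeff_X_pow]

/-- **Critical locus of the superpotential on `X₋`.** Let `f` be a homogeneous
cubic in six variables whose partials have no common zero but the origin, `F` its
polarization, and `W = Σⱼ aⱼ F(Φ₁,…,Φ₁,Φ₂,…,Φ₂)`. If all 16 partial derivatives
of `W` vanish at `(Φ₁, Φ₂, a)` and `Φ₁, Φ₂` are linearly independent, then
`a = 0` and `f` vanishes on the plane spanned by `Φ₁, Φ₂`. -/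
theorem critical_locus_on_X_minus
    (f : MvPolynomial (Fin 6) ℂ) (hf3 : f.IsHomogeneous 3)
    (hsm : ∀ x : Fin 6 → ℂ, (∀ i, eval x (pderiv i f) = 0) → x = 0)
    (F : (Fin 6 → ℂ) → (Fin 6 → ℂ) → (Fin 6 → ℂ) → ℂ)
    (hF_swap12 : ∀ x y z, F x y z = F y x z)
    (hF_swap23 : ∀ x y z, F x y z = F x z y)
    (hF_add : ∀ x x' y z, F (x + x') y z = F x y z + F x' y z)
    (hF_smul : ∀ (c : ℂ) (x y z : Fin 6 → ℂ), F (c • x) y z = c * F x y z)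
    (hF_diag : ∀ x, F x x x = eval x f)
    (W : MvPolynomial ((Fin 6 ⊕ Fin 6) ⊕ Fin 4) ℂ)
    (hW : ∀ (P₁ P₂ : Fin 6 → ℂ) (b : Fin 4 → ℂ),
      eval (Sum.elim (Sum.elim P₁ P₂) b) W =
        b 0 * F P₁ P₁ P₁ + b 1 * F P₁ P₁ P₂ + b 2 * F P₁ P₂ P₂ + b 3 * F P₂ P₂ P₂)
    (Φ₁ Φ₂ : Fin 6 → ℂ) (a : Fin 4 → ℂ)
    (hcrit : ∀ v, eval (Sum.elim (Sum.elim Φ₁ Φ₂) a) (pderiv v W) = 0)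
    (hind : LinearIndependent ℂ ![Φ₁, Φ₂]) :
    (∀ j, a j = 0) ∧ ∀ s t : ℂ, eval (s • Φ₁ + t • Φ₂) f = 0 := by
  -- basic symmetry / multilinearity helpers
  have sw13 : ∀ x y z, F x y z = F z y x := fun x y z => by
    rw [hF_swap23, hF_swap12, hF_swap23]
  have hF_add2 : ∀ x y y' z, F x (y + y') z = F x y z + F x y' z := fun x y y' z => by
    rw [hF_swap12 x (y + y') z, hF_add, ← hF_swap12 x y z, ← hF_swap12 x y' z]
  have hF_add3 : ∀ x y z z', F x y (z + z') = F x y z + F x y z' := fun x y z z' => by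
    rw [hF_swap23 x y (z + z'), hF_add2, ← hF_swap23 x y z, ← hF_swap23 x y z']
  have hF_smul2 : ∀ (c : ℂ) x y z, F x (c • y) z = c * F x y z := fun c x y z => by
    rw [hF_swap12 x (c • y) z, hF_smul, ← hF_swap12 x y z]
  have hF_smul3 : ∀ (c : ℂ) x y z, F x y (c • z) = c * F x y z := fun c x y z => by
    rw [hF_swap23 x y (c • z), hF_smul2, ← hF_swap23 x y z]
  -- expansion lemmas
  have Hexp1 : ∀ (α β : ℂ) (x y w w' : Fin 6 → ℂ),
      F (α • x + β • y) w w' = α * F x w w' + β * F y w w' := by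
    intro α β x y w w'
    rw [hF_add, hF_smul, hF_smul]
  have Hexp2 : ∀ (α β : ℂ) (x y w : Fin 6 → ℂ),
      F w (α • x + β • y) (α • x + β • y)
        = α ^ 2 * F w x x + 2 * (α * β) * F w x y + β ^ 2 * F w y y := by
    intro α β x y w
    simp only [hF_add2, hF_smul2, hF_add3, hF_smul3]
    rw [hF_swap23 w y x]
    ring
  have Hexp3 : ∀ (α β : ℂ) (x y : Fin 6 → ℂ),
      F (α • x + β • y) (α • x + β • y) (α • x + β • y)
        = α ^ 3 * F x x x + 3 * (α ^ 2 * β) * F x x y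
          + 3 * (α * β ^ 2) * F x y y + β ^ 3 * F y y y := by
    intro α β x y
    simp only [hF_add, hF_smul, hF_add2, hF_smul2, hF_add3, hF_smul3]
    rw [hF_swap23 y y x, hF_swap12 y x y, hF_swap12 y x x, hF_swap23 x y x]
    ring
  -- directional derivative extraction at the critical point
  have hdir : ∀ (d : (Fin 6 ⊕ Fin 6) ⊕ Fin 4 → ℂ) (c₀ c₁ c₂ c₃ : ℂ),
      (∀ t : ℂ, eval (fun v => Sum.elim (Sum.elim Φ₁ Φ₂) a v + d v * t) W
        = c₀ + c₁ * t + c₂ * t ^ 2 + c₃ * t ^ 3) → c₁ = 0 := by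
    intro d c₀ c₁ c₂ c₃ h
    have h2 := dirDeriv_eq_c1 W (Sum.elim (Sum.elim Φ₁ Φ₂) a) d c₀ c₁ c₂ c₃ h
    rw [← h2]
    simp [hcrit]
  -- the four equations from the ∂/∂aⱼ directions
  have hval : ∀ j : Fin 4, (∀ t : ℂ,
        eval (fun v => Sum.elim (Sum.elim Φ₁ Φ₂) a v + (Sum.elim (0 : Fin 6 ⊕ Fin 6 → ℂ) (Pi.single j 1)) v * t) W
        = (a 0 * F Φ₁ Φ₁ Φ₁ + a 1 * F Φ₁ Φ₁ Φ₂ + a 2 * F Φ₁ Φ₂ Φ₂ + a 3 * F Φ₂ Φ₂ Φ₂)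
          + ((Pi.single j 1 : Fin 4 → ℂ) 0 * F Φ₁ Φ₁ Φ₁
             + (Pi.single j 1 : Fin 4 → ℂ) 1 * F Φ₁ Φ₁ Φ₂
             + (Pi.single j 1 : Fin 4 → ℂ) 2 * F Φ₁ Φ₂ Φ₂
             + (Pi.single j 1 : Fin 4 → ℂ) 3 * F Φ₂ Φ₂ Φ₂) * t
          + 0 * t ^ 2 + 0 * t ^ 3) := by
    intro j t
    have hfu : (fun v => Sum.elim (Sum.elim Φ₁ Φ₂) a v + (Sum.elim (0 : Fin 6 ⊕ Fin 6 → ℂ) (Pi.single j 1)) v * t)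
        = Sum.elim (Sum.elim Φ₁ Φ₂) (fun k => a k + (Pi.single j 1 : Fin 4 → ℂ) k * t) := by
      funext v
      rcases v with (i | i) | k <;> simp
    rw [hfu, hW]
    ring
  have h30 : F Φ₁ Φ₁ Φ₁ = 0 := by
    have := hdir (Sum.elim (0 : Fin 6 ⊕ Fin 6 → ℂ) (Pi.single (0 : Fin 4) 1)) _ _ _ _ (hval 0)
    simpa using this
  have h31 : F Φ₁ Φ₁ Φ₂ = 0 := by
    have := hdir (Sum.elim (0 : Fin 6 ⊕ Fin 6 → ℂ) (Pi.single (1 : Fin 4) 1)) _ _ _ _ (hval 1)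
    simpa [Pi.single_apply] using this
  have h32 : F Φ₁ Φ₂ Φ₂ = 0 := by
    have := hdir (Sum.elim (0 : Fin 6 ⊕ Fin 6 → ℂ) (Pi.single (2 : Fin 4) 1)) _ _ _ _ (hval 2)
    simpa [Pi.single_apply] using this
  have h33 : F Φ₂ Φ₂ Φ₂ = 0 := by
    have := hdir (Sum.elim (0 : Fin 6 ⊕ Fin 6 → ℂ) (Pi.single (3 : Fin 4) 1)) _ _ _ _ (hval 3)
    simpa [Pi.single_apply] using this
  -- the two vector equations from the ∂/∂Φ directions
  have hE1 : ∀ u : Fin 6 → ℂ,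
      3 * a 0 * F u Φ₁ Φ₁ + 2 * a 1 * F u Φ₁ Φ₂ + a 2 * F u Φ₂ Φ₂ = 0 := by
    intro u
    refine hdir (Sum.elim (Sum.elim u (0 : Fin 6 → ℂ)) (0 : Fin 4 → ℂ))
      (a 0 * F Φ₁ Φ₁ Φ₁ + a 1 * F Φ₁ Φ₁ Φ₂ + a 2 * F Φ₁ Φ₂ Φ₂ + a 3 * F Φ₂ Φ₂ Φ₂)
      _ (3 * a 0 * F u u Φ₁ + a 1 * F u u Φ₂) (a 0 * F u u u) (fun t => ?_)
    have hfu : (fun v => Sum.elim (Sum.elim Φ₁ Φ₂) a v + (Sum.elim (Sum.elim u (0 : Fin 6 → ℂ)) (0 : Fin 4 → ℂ)) v * t)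
        = Sum.elim (Sum.elim ((1 : ℂ) • Φ₁ + t • u) Φ₂) a := by
      funext v
      rcases v with (i | i) | k <;> simp [mul_comm]
    rw [hfu, hW, Hexp3 1 t Φ₁ u,
      sw13 ((1 : ℂ) • Φ₁ + t • u) ((1 : ℂ) • Φ₁ + t • u) Φ₂, Hexp2 1 t Φ₁ u Φ₂,
      Hexp1 1 t Φ₁ u Φ₂ Φ₂,
      sw13 Φ₁ Φ₁ u, sw13 Φ₁ u u, sw13 Φ₂ Φ₁ Φ₁, sw13 Φ₂ Φ₁ u, sw13 Φ₂ u u]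
    ring
  have hE2 : ∀ u : Fin 6 → ℂ,
      a 1 * F u Φ₁ Φ₁ + 2 * a 2 * F u Φ₁ Φ₂ + 3 * a 3 * F u Φ₂ Φ₂ = 0 := by
    intro u
    refine hdir (Sum.elim (Sum.elim (0 : Fin 6 → ℂ) u) (0 : Fin 4 → ℂ))
      (a 0 * F Φ₁ Φ₁ Φ₁ + a 1 * F Φ₁ Φ₁ Φ₂ + a 2 * F Φ₁ Φ₂ Φ₂ + a 3 * F Φ₂ Φ₂ Φ₂)
      _ (a 2 * F u u Φ₁ + 3 * a 3 * F u u Φ₂) (a 3 * F u u u) (fun t => ?_)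
    have hfu : (fun v => Sum.elim (Sum.elim Φ₁ Φ₂) a v + (Sum.elim (Sum.elim (0 : Fin 6 → ℂ) u) (0 : Fin 4 → ℂ)) v * t)
        = Sum.elim (Sum.elim Φ₁ ((1 : ℂ) • Φ₂ + t • u)) a := by
      funext v
      rcases v with (i | i) | k <;> simp [mul_comm]
    rw [hfu, hW, Hexp3 1 t Φ₂ u,
      sw13 Φ₁ Φ₁ ((1 : ℂ) • Φ₂ + t • u), Hexp1 1 t Φ₂ u Φ₁ Φ₁,
      Hexp2 1 t Φ₂ u Φ₁,
      show F Φ₂ Φ₂ u = F u Φ₂ Φ₂ from sw13 _ _ _,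
      show F Φ₂ u u = F u u Φ₂ from sw13 _ _ _,
      show F Φ₂ Φ₁ Φ₁ = F Φ₁ Φ₁ Φ₂ from sw13 _ _ _,
      show F Φ₁ Φ₂ u = F u Φ₁ Φ₂ from by rw [sw13 Φ₁ Φ₂ u, hF_swap23 u Φ₂ Φ₁],
      show F Φ₁ u u = F u u Φ₁ from sw13 _ _ _]
    ring
  -- gradient of f along the plane
  have pair := LinearIndependent.pair_iff.mp hind
  have hgrad : ∀ (s t : ℂ) (i : Fin 6),
      eval (s • Φ₁ + t • Φ₂) (pderiv i f)
        = 3 * (s ^ 2 * F (Pi.single i 1 : Fin 6 → ℂ) Φ₁ Φ₁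
            + 2 * (s * t) * F (Pi.single i 1 : Fin 6 → ℂ) Φ₁ Φ₂
            + t ^ 2 * F (Pi.single i 1 : Fin 6 → ℂ) Φ₂ Φ₂) := by
    intro s t i
    have hexp : ∀ r : ℂ,
        eval (fun v => (s • Φ₁ + t • Φ₂) v + (Pi.single i 1 : Fin 6 → ℂ) v * r) f
          = F (s • Φ₁ + t • Φ₂) (s • Φ₁ + t • Φ₂) (s • Φ₁ + t • Φ₂)
            + 3 * F (Pi.single i 1 : Fin 6 → ℂ) (s • Φ₁ + t • Φ₂) (s • Φ₁ + t • Φ₂) * r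
            + 3 * F (Pi.single i 1 : Fin 6 → ℂ) (Pi.single i 1 : Fin 6 → ℂ) (s • Φ₁ + t • Φ₂)
              * r ^ 2
            + F (Pi.single i 1 : Fin 6 → ℂ) (Pi.single i 1 : Fin 6 → ℂ)
                (Pi.single i 1 : Fin 6 → ℂ) * r ^ 3 := by
      intro r
      have hfu : (fun v => (s • Φ₁ + t • Φ₂) v + (Pi.single i 1 : Fin 6 → ℂ) v * r)
          = (1 : ℂ) • (s • Φ₁ + t • Φ₂) + r • (Pi.single i 1 : Fin 6 → ℂ) := by
        funext v; simp [mul_comm]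
      rw [hfu, ← hF_diag, Hexp3 1 r (s • Φ₁ + t • Φ₂) (Pi.single i 1 : Fin 6 → ℂ),
        show F (s • Φ₁ + t • Φ₂) (s • Φ₁ + t • Φ₂) (Pi.single i 1 : Fin 6 → ℂ)
          = F (Pi.single i 1 : Fin 6 → ℂ) (s • Φ₁ + t • Φ₂) (s • Φ₁ + t • Φ₂) from sw13 _ _ _,
        show F (s • Φ₁ + t • Φ₂) (Pi.single i 1 : Fin 6 → ℂ) (Pi.single i 1 : Fin 6 → ℂ)
          = F (Pi.single i 1 : Fin 6 → ℂ) (Pi.single i 1 : Fin 6 → ℂ) (s • Φ₁ + t • Φ₂)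
          from sw13 _ _ _]
      ring
    have key := dirDeriv_eq_c1 f (s • Φ₁ + t • Φ₂) (Pi.single i 1 : Fin 6 → ℂ) _ _ _ _ hexp
    have hsum : ∑ v, (Pi.single i 1 : Fin 6 → ℂ) v * eval (s • Φ₁ + t • Φ₂) (pderiv v f)
        = eval (s • Φ₁ + t • Φ₂) (pderiv i f) := by
      rw [Finset.sum_eq_single i]
      · simp
      · intro b _ hb
        simp [Pi.single_apply, hb]
      · simp
    rw [← hsum, key, Hexp2 s t Φ₁ Φ₂ (Pi.single i 1 : Fin 6 → ℂ)]
  -- the key claim: a nonzero "conic" relation is impossible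
  have claim : ∀ α β γ : ℂ,
      (∀ u : Fin 6 → ℂ, α * F u Φ₁ Φ₁ + β * F u Φ₁ Φ₂ + γ * F u Φ₂ Φ₂ = 0) →
      β ^ 2 = 4 * (α * γ) → α = 0 ∧ β = 0 ∧ γ = 0 := by
    intro α β γ hrel hconic
    have key : ∀ s t : ℂ, s ^ 2 = α → 2 * (s * t) = β → t ^ 2 = γ → s = 0 ∧ t = 0 := by
      intro s t h1 h2 h3
      have hx : s • Φ₁ + t • Φ₂ = 0 := by
        apply hsm
        intro i
        rw [hgrad s t i, h1, h2, h3, hrel (Pi.single i 1 : Fin 6 → ℂ), mul_zero]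
      exact pair s t hx
    by_cases hα : α = 0
    · have hβ : β = 0 := by
        have hβ2 : β ^ 2 = 0 := by rw [hconic, hα]; ring
        exact sq_eq_zero_iff.mp hβ2
      obtain ⟨τ, hτ⟩ := IsAlgClosed.exists_pow_nat_eq γ (n := 2) (by norm_num)
      have hkey := key 0 τ (by rw [hα]; ring) (by rw [hβ]; ring) hτ
      exact ⟨hα, hβ, by rw [← hτ, hkey.2]; ring⟩
    · exfalso
      obtain ⟨σ, hσ⟩ := IsAlgClosed.exists_pow_nat_eq α (n := 2) (by norm_num)
      have hσ0 : σ ≠ 0 := by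
        intro h; apply hα; rw [← hσ, h]; ring
      have h2' : 2 * (σ * (β / (2 * σ))) = β := by field_simp
      have h3' : (β / (2 * σ)) ^ 2 = γ := by
        field_simp
        linear_combination hconic - 4 * γ * hσ
      have hkey := key σ (β / (2 * σ)) hσ h2' h3'
      exact hσ0 hkey.1
  -- the coefficients vanish
  have ha0123 : a 0 = 0 ∧ a 1 = 0 ∧ a 2 = 0 ∧ a 3 = 0 := by
    by_cases hc : a 1 ^ 2 - 3 * (a 0 * a 2) = 0
    · obtain ⟨h1, h2, h3⟩ := claim (3 * a 0) (2 * a 1) (a 2)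
        (fun u => by linear_combination hE1 u)
        (by linear_combination 4 * hc)
      have ha0 : a 0 = 0 := by linear_combination h1 / 3
      have ha1 : a 1 = 0 := by linear_combination h2 / 2
      obtain ⟨-, -, h6⟩ := claim 0 0 (3 * a 3)
        (fun u => by
          linear_combination hE2 u - F u Φ₁ Φ₁ * ha1 - 2 * F u Φ₁ Φ₂ * h3)
        (by ring)
      have ha3 : a 3 = 0 := by linear_combination h6 / 3
      exact ⟨ha0, ha1, h3, ha3⟩
    · exfalso
      obtain ⟨r, hr⟩ := IsAlgClosed.exists_pow_nat_eq
        ((a 1 * a 2 - 9 * (a 0 * a 3)) ^ 2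
          - 4 * ((a 1 ^ 2 - 3 * (a 0 * a 2)) * (a 2 ^ 2 - 3 * (a 1 * a 3)))) (n := 2)
        (by norm_num)
      have h2cs : 2 * (a 1 ^ 2 - 3 * (a 0 * a 2))
            * ((-(a 1 * a 2 - 9 * (a 0 * a 3)) + r) / (2 * (a 1 ^ 2 - 3 * (a 0 * a 2))))
          = -(a 1 * a 2 - 9 * (a 0 * a 3)) + r := by
        rw [mul_div_assoc', mul_div_cancel_left₀ _ (mul_ne_zero two_ne_zero hc)]
      set s : ℂ := (-(a 1 * a 2 - 9 * (a 0 * a 3)) + r) / (2 * (a 1 ^ 2 - 3 * (a 0 * a 2)))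
        with hsdef
      have hs : (a 1 ^ 2 - 3 * (a 0 * a 2)) * s ^ 2 + (a 1 * a 2 - 9 * (a 0 * a 3)) * s
          + (a 2 ^ 2 - 3 * (a 1 * a 3)) = 0 := by
        have h4 : (4 : ℂ) * (a 1 ^ 2 - 3 * (a 0 * a 2)) ≠ 0 :=
          mul_ne_zero (by norm_num) hc
        apply mul_left_cancel₀ h4
        rw [mul_zero]
        linear_combination (2 * (a 1 ^ 2 - 3 * (a 0 * a 2)) * s
          + (a 1 * a 2 - 9 * (a 0 * a 3)) + r) * h2cs + hr
      obtain ⟨hα0, hβ0, hγ0⟩ := claim (3 * a 0 * s + a 1) (2 * (a 1 * s + a 2))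
        (a 2 * s + 3 * a 3)
        (fun u => by linear_combination s * hE1 u + hE2 u)
        (by linear_combination 4 * hs)
      have hs0 : s = 0 := by
        have hsc : (a 1 ^ 2 - 3 * (a 0 * a 2)) * s = 0 := by
          linear_combination (a 1 / 2) * hβ0 - a 2 * hα0
        exact (mul_eq_zero.mp hsc).resolve_left hc
      apply hc
      have ha1 : a 1 = 0 := by linear_combination hα0 - 3 * a 0 * hs0
      have ha2 : a 2 = 0 := by linear_combination hβ0 / 2 - a 1 * hs0
      rw [ha1, ha2]; ring
  refine ⟨fun j => ?_, fun s t => ?_⟩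
  · fin_cases j
    · exact ha0123.1
    · exact ha0123.2.1
    · exact ha0123.2.2.1
    · exact ha0123.2.2.2
  · rw [← hF_diag, Hexp3 s t Φ₁ Φ₂, h30, h31, h32, h33]; ring
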